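/- For a vertex u with label a adjacent to leaves labeled c, c+1, ..., d where a + b = c + d, and a vertex w with label b, the type-1 transfer u → w moving leaves c+k, ..., d-k (for any 0 ≤ k ≤ (d-c+1-l)/2 with l = 2k) to w preserves gracefulness: after deleting the edges from u to these leaves and adding edges from w to them, the resulting tree's labeling is still graceful. -/

import Mathlib

open SimpleGraph

/-- The induced label of an edge: the absolute difference of endpoint labels. -/
def edgeLabel {V : Type*} (f : V → ℕ) : Sym2 V → ℕ :=
  Sym2.lift ⟨fun a b => ((f a : ℤ) - (f b : ℤ)).natAbs,
    fun a b => by dsimp only; omega⟩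

/-- `f` is a graceful labeling of `G`: the vertex labels are exactly
`{0, …, |V| - 1}` and the induced edge labels are pairwise distinct. -/
def GracefulLabeling {V : Type*} [Fintype V] (G : SimpleGraph V) (f : V → ℕ) : Prop :=
  Function.Injective f ∧ (∀ v, f v < Fintype.card V) ∧
    (∀ k, k < Fintype.card V → ∃ v, f v = k) ∧
    Set.InjOn (edgeLabel f) G.edgeSet

/-- The graph obtained from `G` by a transfer `u → w` of the set `L` of leaves:
the edges from `u` to `L` are deleted and edges from `w` to `L` are added. -/
def transferGraph {V : Type*} (G : SimpleGraph V) (u w : V) (L : Set V) :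
    SimpleGraph V :=
  SimpleGraph.fromRel (fun a b =>
    (G.Adj a b ∧ ¬(a = u ∧ b ∈ L) ∧ ¬(b = u ∧ a ∈ L)) ∨
    (a = w ∧ b ∈ L) ∨ (b = w ∧ a ∈ L))

/-- Type-1 transfer: if `u` (labeled `a`) is adjacent to leaves labeled
`c, c+1, …, d`, `w` is labeled `b`, `a + b = c + d`, and `0 ≤ 2k ≤ d - c + 1`,
then moving the leaves labeled `c+k, …, d-k` from `u` to `w` yields a tree on
which the same labeling is still graceful. -/
theorem stmt14 {V : Type*} [Fintype V] [DecidableEq V] (G : SimpleGraph V)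
    [DecidableRel G.Adj] (hT : G.IsTree) (f : V → ℕ)
    (hf : GracefulLabeling G f) (u w : V) (a b c d k : ℕ)
    (ha : f u = a) (hb : f w = b) (hcd : c ≤ d) (hsum : a + b = c + d)
    (hk : 2 * k ≤ d - c + 1)
    (hleaves : ∀ n, c ≤ n → n ≤ d → ∃ x, f x = n ∧ G.Adj u x ∧ G.degree x = 1)
    (L : Set V)
    (hL : L = {x | G.Adj u x ∧ G.degree x = 1 ∧ c + k ≤ f x ∧ f x ≤ d - k})
    (hwL : w ∉ L) (hwu : w ≠ u) :
    (transferGraph G u w L).IsTree ∧ GracefulLabeling (transferGraph G u w L) f := by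
  classical
  set G' := transferGraph G u w L with hG'def
  have hLmem : ∀ x, x ∈ L ↔ (G.Adj u x ∧ G.degree x = 1 ∧ c + k ≤ f x ∧ f x ≤ d - k) := by
    intro x; rw [hL]; rfl
  -- unique neighbor of a leaf in G
  have leafnbr : ∀ x ∈ L, ∀ y, G.Adj x y → y = u := by
    intro x hx y hxy
    obtain ⟨hux, hdeg, -⟩ := (hLmem x).1 hx
    have hcard : (G.neighborFinset x).card = 1 := by
      rw [G.card_neighborFinset_eq_degree]; exact hdeg
    obtain ⟨t, ht⟩ := Finset.card_eq_one.mp hcard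
    have hu : u ∈ G.neighborFinset x := by simpa using hux.symm
    have hy : y ∈ G.neighborFinset x := by simpa using hxy
    rw [ht] at hu hy
    simp only [Finset.mem_singleton] at hu hy
    rw [hy, hu]
  have huL : u ∉ L := by
    intro hu
    exact G.loopless.irrefl u ((hLmem u).1 hu).1
  -- adjacency characterization of G'
  have hadj : ∀ p q, G'.Adj p q ↔
      ((G.Adj p q ∧ ¬(p = u ∧ q ∈ L) ∧ ¬(q = u ∧ p ∈ L)) ∨
       (p = w ∧ q ∈ L) ∨ (q = w ∧ p ∈ L)) := by
    intro p q
    rw [hG'def]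
    constructor
    · rintro ⟨hne, h | h⟩
      · exact h
      · rcases h with ⟨h1, h2, h3⟩ | ⟨h1, h2⟩ | ⟨h1, h2⟩
        · exact Or.inl ⟨h1.symm, h3, h2⟩
        · exact Or.inr (Or.inr ⟨h1, h2⟩)
        · exact Or.inr (Or.inl ⟨h1, h2⟩)
    · intro h
      refine ⟨?_, Or.inl h⟩
      rcases h with ⟨h1, -⟩ | ⟨h1, h2⟩ | ⟨h1, h2⟩
      · exact h1.ne
      · rintro rfl; rw [h1] at h2; exact hwL h2
      · rintro rfl; rw [h1] at h2; exact hwL h2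
  -- x ∈ L has unique neighbor w in G'
  have hG'leaf : ∀ x ∈ L, ∀ y, G'.Adj x y → y = w := by
    intro x hx y hxy
    rcases (hadj x y).1 hxy with ⟨h1, -, h3⟩ | ⟨h1, -⟩ | ⟨h1, -⟩
    · have := leafnbr x hx y h1
      exact absurd ⟨this, hx⟩ h3
    · exact absurd h1 (fun h => hwL (h ▸ hx))
    · exact h1
  have hadjwx : ∀ x ∈ L, G'.Adj w x := by
    intro x hx
    exact (hadj w x).2 (Or.inr (Or.inl ⟨rfl, hx⟩))
  -- lifting paths from G to G'
  have lift : ∀ (p q : V) (W : G.Walk p q), p ∉ L → q ∉ L → W.IsPath → G'.Reachable p q := by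
    intro p q W
    induction W with
    | nil => intro _ _ _; exact Reachable.refl _
    | @cons p v q h W ih =>
      intro hp hq hW
      by_cases hv : v ∈ L
      · exfalso
        cases W with
        | nil => exact hq hv
        | @cons _ z _ h2 W2 =>
          have hz : z = u := leafnbr v hv z h2
          have hpu : p = u := leafnbr v hv p h.symm
          have hnd := hW.support_nodup
          rw [Walk.support_cons, Walk.support_cons] at hnd
          have hpmem : p ∈ W2.support := by
            rw [hpu, ← hz]; exact W2.start_mem_support
          exact (List.nodup_cons.mp hnd).1 (List.mem_cons_of_mem _ hpmem)
      · have hadjpv : G'.Adj p v := by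
          refine (hadj p v).2 (Or.inl ⟨h, ?_, ?_⟩)
          · rintro ⟨-, h2⟩; exact hv h2
          · rintro ⟨-, h2⟩; exact hp h2
        exact (hadjpv.reachable).trans (ih hv hq hW.of_cons)
  -- full reachability
  have reach : ∀ p q, G'.Reachable p q := by
    have step : ∀ p : V, ∃ p', p' ∉ L ∧ G'.Reachable p p' := by
      intro p
      by_cases hp : p ∈ L
      · exact ⟨w, hwL, (hadjwx p hp).symm.reachable⟩
      · exact ⟨p, hp, Reachable.refl _⟩
    intro p q
    obtain ⟨p', hp', hrp⟩ := step p
    obtain ⟨q', hq', hrq⟩ := step q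
    obtain ⟨W⟩ := hT.isConnected.preconnected p' q'
    exact hrp.trans ((lift p' q' W.toPath hp' hq' W.toPath.2).trans hrq.symm)
  have hconn : G'.Connected := by
    rw [connected_iff]
    exact ⟨fun p q => reach p q, hT.isConnected.nonempty⟩
  -- no vertex of L lies on a cycle of G'
  have hacyc : G'.IsAcyclic := by
    intro v c hc
    have hnoL : ∀ x ∈ L, x ∉ c.support := by
      intro x hx hxs
      have hc' : (c.rotate x hxs).IsCycle := hc.rotate hxs
      set p := c.rotate x hxs with hp
      clear_value p
      cases p with
      | nil => exact hc'.ne_nil rfl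
      | @cons _ v' _ h1 rest =>
        rw [Walk.cons_isCycle_iff] at hc'
        have hv' : v' = w := hG'leaf x hx v' h1
        have hnotin : s(x, w) ∉ rest.edges := hv' ▸ hc'.2
        cases hre : rest.reverse with
        | nil => exact absurd h1 (G'.loopless.irrefl _)
        | @cons _ y _ h2 r2 =>
          have hy : y = w := hG'leaf x hx y h2
          have hmem : s(x, y) ∈ rest.reverse.edges := by
            rw [hre, Walk.edges_cons]; exact List.mem_cons_self
          rw [Walk.edges_reverse, List.mem_reverse] at hmem
          rw [hy] at hmem
          exact hnotin hmem
    have hedges : ∀ e ∈ c.edges, e ∈ G.edgeSet := by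
      intro e
      induction e using Sym2.ind with
      | _ p q =>
        intro he
        have hp : p ∈ c.support := c.fst_mem_support_of_mem_edges he
        have hq : q ∈ c.support := c.snd_mem_support_of_mem_edges he
        rw [SimpleGraph.mem_edgeSet]
        rcases (hadj p q).1 (c.adj_of_mem_edges he) with ⟨h1, -⟩ | ⟨-, h2⟩ | ⟨-, h2⟩
        · exact h1
        · exact absurd hq (hnoL q h2)
        · exact absurd hp (hnoL p h2)
    exact hT.IsAcyclic (c.transfer G hedges) (hc.transfer hedges)
  have labmk : ∀ p q : V, edgeLabel f s(p, q) = ((f p : ℤ) - f q).natAbs :=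
    fun p q => rfl
  have key : ∀ e ∈ G'.edgeSet, ∃ e' ∈ G.edgeSet, edgeLabel f e' = edgeLabel f e ∧
      ((e' = e ∧ ∀ x ∈ L, e ≠ s(u, x)) ∨
       (∃ x ∈ L, ∃ y ∈ L, e = s(w, x) ∧ e' = s(u, y) ∧ f x + f y = c + d)) := by
    intro e
    induction e using Sym2.ind with
    | _ p q =>
      intro he
      rw [SimpleGraph.mem_edgeSet] at he
      rcases (hadj p q).1 he with ⟨h1, h2, h3⟩ | ⟨rfl, hq⟩ | ⟨rfl, hp⟩
      · refine ⟨s(p, q), (G.mem_edgeSet).2 h1, rfl, Or.inl ⟨rfl, ?_⟩⟩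
        intro x hx hxeq
        rcases Sym2.eq_iff.mp hxeq with ⟨hpu, hqx⟩ | ⟨hpx, hqu⟩
        · exact h2 ⟨hpu, hqx ▸ hx⟩
        · exact h3 ⟨hqu, hpx ▸ hx⟩
      · obtain ⟨-, -, hn1, hn2⟩ := (hLmem q).1 hq
        obtain ⟨y, hy1, hy2, hy3⟩ := hleaves (c + d - f q) (by omega) (by omega)
        have hyL : y ∈ L := (hLmem y).2 ⟨hy2, hy3, by omega, by omega⟩
        refine ⟨s(u, y), (G.mem_edgeSet).2 hy2, ?_,
          Or.inr ⟨q, hq, y, hyL, rfl, rfl, by omega⟩⟩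
        rw [labmk, labmk, ha, hb, hy1]
        omega
      · obtain ⟨-, -, hn1, hn2⟩ := (hLmem p).1 hp
        obtain ⟨y, hy1, hy2, hy3⟩ := hleaves (c + d - f p) (by omega) (by omega)
        have hyL : y ∈ L := (hLmem y).2 ⟨hy2, hy3, by omega, by omega⟩
        refine ⟨s(u, y), (G.mem_edgeSet).2 hy2, ?_,
          Or.inr ⟨p, hp, y, hyL, Sym2.eq_swap, rfl, by omega⟩⟩
        rw [labmk, labmk, ha, hb, hy1]
        omega
  refine ⟨⟨hconn, hacyc⟩, hf.1, hf.2.1, hf.2.2.1, ?_⟩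
  intro e1 he1 e2 he2 hlab
  obtain ⟨e1', he1', hlab1, hcase1⟩ := key e1 he1
  obtain ⟨e2', he2', hlab2, hcase2⟩ := key e2 he2
  have heq : e1' = e2' := hf.2.2.2 he1' he2' (by rw [hlab1, hlab2, hlab])
  rcases hcase1 with ⟨h11, h12⟩ | ⟨x1, hx1, y1, hy1L, h11, h12, h13⟩ <;>
    rcases hcase2 with ⟨h21, h22⟩ | ⟨x2, hx2, y2, hy2L, h21, h22, h23⟩
  · rw [← h11, ← h21]; exact heq
  · exact absurd (by rw [← h11, heq, h22]) (fun h => h12 y2 hy2L h)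
  · exact absurd (by rw [← h21, ← heq, h12]) (fun h => h22 y1 hy1L h)
  · have hyy : y1 = y2 := by
      have hs : s(u, y1) = s(u, y2) := by rw [← h12, ← h22]; exact heq
      rcases Sym2.eq_iff.mp hs with ⟨-, h⟩ | ⟨h1', h2'⟩
      · exact h
      · exact h2'.trans h1'
    have hfy : f y1 = f y2 := by rw [hyy]
    have hfx : f x1 = f x2 := by omega
    rw [h11, h21, hf.1 hfx]
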